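/- Let X and Y be real normed linear spaces and T a bounded linear operator from X to Y with operator norm 1. If there exists ε ∈ [0,1) such that T is ε-approximately orthogonality preserving in the sense of Dragomir (ε-DAOP), then T is injective. -/

import Mathlib

/-- Birkhoff–James orthogonality: `x ⊥_B y` iff `‖x + λ • y‖ ≥ ‖x‖` for every real `λ`. -/
def BJOrth {E : Type*} [NormedAddCommGroup E] [NormedSpace ℝ E] (x y : E) : Prop :=
  ∀ lam : ℝ, ‖x‖ ≤ ‖x + lam • y‖

/-- `x` is a left-symmetric point: `x ⊥_B y` implies `y ⊥_B x` for all `y`. -/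
def LeftSymmetricPt {E : Type*} [NormedAddCommGroup E] [NormedSpace ℝ E] (x : E) : Prop :=
  ∀ y : E, BJOrth x y → BJOrth y x

/-- `x` is a right-symmetric point: `y ⊥_B x` implies `x ⊥_B y` for all `y`. -/
def RightSymmetricPt {E : Type*} [NormedAddCommGroup E] [NormedSpace ℝ E] (x : E) : Prop :=
  ∀ y : E, BJOrth y x → BJOrth x y

/-- A nonzero `x` is a smooth point if there is exactly one norm-one continuous linear
functional `f` with `f x = ‖x‖`. -/
def SmoothPoint {E : Type*} [NormedAddCommGroup E] [NormedSpace ℝ E] (x : E) : Prop :=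
  ∃! f : E →L[ℝ] ℝ, ‖f‖ = 1 ∧ f x = ‖x‖

/-- A normed space is reflexive if the canonical embedding into the double dual is onto. -/
def ReflexiveSpace (E : Type*) [NormedAddCommGroup E] [NormedSpace ℝ E] : Prop :=
  Function.Surjective (NormedSpace.inclusionInDoubleDual ℝ E)

/-- `T` (a compact operator) is a right-symmetric point of the space of compact operators
(with the operator norm): `A ⊥_B T` implies `T ⊥_B A` for every compact operator `A`. -/
def RightSymmetricCompactOp {X Y : Type*} [NormedAddCommGroup X] [NormedSpace ℝ X]
    [NormedAddCommGroup Y] [NormedSpace ℝ Y] (T : X →L[ℝ] Y) : Prop :=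
  ∀ A : X →L[ℝ] Y, IsCompactOperator A → BJOrth A T → BJOrth T A

/-- `T` is left orthogonality preserving at `x`: `x ⊥_B y` implies `T x ⊥_B T y`. -/
def LeftOPAt {X Y : Type*} [NormedAddCommGroup X] [NormedSpace ℝ X]
    [NormedAddCommGroup Y] [NormedSpace ℝ Y] (T : X →L[ℝ] Y) (x : X) : Prop :=
  ∀ y : X, BJOrth x y → BJOrth (T x) (T y)

/-- Approximate Birkhoff–James orthogonality in the sense of Dragomir–Chmieliński:
`x ⊥_D^ε y` iff `‖x + λ • y‖ ≥ √(1 - ε²) * ‖x‖` for every real `λ`. -/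
def ApproxOrthD {E : Type*} [NormedAddCommGroup E] [NormedSpace ℝ E]
    (ε : ℝ) (x y : E) : Prop :=
  ∀ lam : ℝ, Real.sqrt (1 - ε ^ 2) * ‖x‖ ≤ ‖x + lam • y‖

/-- Approximate Birkhoff–James orthogonality in the sense of Chmieliński:
`x ⊥_B^ε y` iff `‖x + λ • y‖² ≥ ‖x‖² - 2ε‖x‖‖λ • y‖` for every real `λ`. -/
def ApproxOrthC {E : Type*} [NormedAddCommGroup E] [NormedSpace ℝ E]
    (ε : ℝ) (x y : E) : Prop :=
  ∀ lam : ℝ, ‖x‖ ^ 2 - 2 * ε * ‖x‖ * ‖lam • y‖ ≤ ‖x + lam • y‖ ^ 2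

/-- A norm-one bounded linear operator `T : X → Y` that is `ε`-approximately
orthogonality preserving in the sense of Dragomir for some `ε ∈ [0,1)` is injective. -/
theorem injective_of_DAOP {X Y : Type*} [NormedAddCommGroup X] [NormedSpace ℝ X]
    [NormedAddCommGroup Y] [NormedSpace ℝ Y]
    (T : X →L[ℝ] Y) (hT : ‖T‖ = 1)
    (h : ∃ ε : ℝ, 0 ≤ ε ∧ ε < 1 ∧ ∀ x y : X, BJOrth x y → ApproxOrthD ε (T x) (T y)) :
    Function.Injective T := by
  obtain ⟨ε, hε0, hε1, hP⟩ := h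
  have hsq : 0 < Real.sqrt (1 - ε ^ 2) := Real.sqrt_pos.2 (by nlinarith)
  have hTne : ∃ z : X, T z ≠ 0 := by
    by_contra hc
    push_neg at hc
    have hT0 : T = 0 := by ext w; simp [hc w]
    rw [hT0] at hT; simp at hT
  obtain ⟨z, hz⟩ := hTne
  have key : ∀ x : X, T x = 0 → x = 0 := by
    intro x hx
    by_contra hxne
    have claim : ∀ y : X, T y ≠ 0 → BJOrth x y := by
      intro y hy
      have hy0 : y ≠ 0 := fun h0 => hy (by simp [h0])
      have hcont : Continuous fun c : ℝ => ‖x + c • y‖ := by continuity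
      have hcoer : Filter.Tendsto (fun c : ℝ => ‖x + c • y‖)
          (Filter.cocompact ℝ) Filter.atTop := by
        have h1 : Filter.Tendsto (fun c : ℝ => ‖c‖ * ‖y‖ - ‖x‖)
            (Filter.cocompact ℝ) Filter.atTop := by
          apply Filter.tendsto_atTop_add_const_right
          exact Filter.Tendsto.atTop_mul_const (norm_pos_iff.2 hy0)
            tendsto_norm_cocompact_atTop
        apply Filter.tendsto_atTop_mono _ h1
        intro c
        have h2 : ‖c • y‖ ≤ ‖x + c • y‖ + ‖x‖ := by
          have := norm_add_le (x + c • y) (-x)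
          simpa [add_comm] using this
        rw [norm_smul] at h2
        linarith
      obtain ⟨c₀, hc₀⟩ := hcont.exists_forall_le hcoer
      have horth : BJOrth (x + c₀ • y) y := by
        intro lam
        have := hc₀ (c₀ + lam)
        simpa [add_smul, add_assoc] using this
      have hd := hP _ _ horth (-c₀)
      have hTe : T (x + c₀ • y) = c₀ • T y := by simp [hx]
      rw [hTe] at hd
      have hd0 : Real.sqrt (1 - ε ^ 2) * ‖c₀ • T y‖ ≤ 0 := by
        simpa using hd
      have hc00 : c₀ = 0 := by
        by_contra hcne
        have : (0 : ℝ) < ‖c₀ • T y‖ := norm_pos_iff.2 (smul_ne_zero hcne hy)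
        nlinarith
      intro lam
      have := hc₀ lam
      simpa [hc00] using this
    have all : ∀ y : X, BJOrth x y := by
      intro y lam
      rcases eq_or_ne (T y) 0 with h0 | h0
      · refine le_of_forall_pos_le_add ?_
        intro δ hδ
        set s : ℝ := δ / (|lam| * ‖z‖ + 1) with hs_def
        have hs : 0 < s := div_pos hδ (by positivity)
        have hTys : T (y + s • z) ≠ 0 := by
          simp only [map_add, map_smul, h0, zero_add]
          exact smul_ne_zero (ne_of_gt hs) hz
        have h3 := claim _ hTys lam
        have h4 : x + lam • (y + s • z) = (x + lam • y) + (lam * s) • z := by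
          rw [smul_add, smul_smul]; abel
        rw [h4] at h3
        have h5 : ‖(x + lam • y) + (lam * s) • z‖ ≤ ‖x + lam • y‖ + |lam| * |s| * ‖z‖ := by
          have := norm_add_le (x + lam • y) ((lam * s) • z)
          simpa [norm_smul] using this
        have h6 : |lam| * |s| * ‖z‖ ≤ δ := by
          rw [abs_of_pos hs]
          have hδeq : s * (|lam| * ‖z‖ + 1) = δ := by
            rw [hs_def, div_mul_cancel₀]; positivity
          nlinarith [hs.le, norm_nonneg z, abs_nonneg lam]
        linarith
      · exact claim y h0 lam
    have hfin := all (-x) 1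
    simp only [one_smul, add_neg_cancel, norm_zero] at hfin
    exact hxne (norm_le_zero_iff.1 hfin)
  intro a b hab
  have h1 : T (a - b) = 0 := by simp [hab]
  have := key _ h1
  exact sub_eq_zero.1 this
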